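/- Let k ≥ 2, n > k, and let F ⊆ 2^[n] be an (n−1)-trace k-Sperner family. Suppose F₁ ⊊ ... ⊊ F_k ∈ F form a chain with |F₂ \ F₁| ≥ 2 (so ℓ = 1 in the type II-ℓ classification), let x ∈ F₁, z ∉ F_k, and let σ₁, ..., σ_m be an ordering of the m ≥ 2 elements of F₂ \ F₁. Then any maximal chain C of 2^[n] containing all the sets (F₁ − x) + σ₁, F₁ + σ₁, (F₁ + σ₁) + σ₂, ..., F₂ − σ_m, (F₂ − σ_m) + z, and F_j + z for 2 ≤ j ≤ k, satisfies |C ∩ F| ≤ k − 2. -/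

import Mathlib

def IsKSperner {α : Type*} (k : ℕ) (G : Finset (Finset α)) : Prop :=
  ¬ ∃ c : Fin (k+1) → Finset α, (∀ i j : Fin (k+1), i < j → c i ⊂ c j) ∧ ∀ i, c i ∈ G

def maxChains (n : ℕ) : Finset (Finset (Finset (Fin n))) :=
  Finset.univ.powerset.filter (fun C => C.card = n + 1 ∧ ∀ A ∈ C, ∀ B ∈ C, A ⊆ B ∨ B ⊆ A)

lemma ssub_of_card {α : Type*} [DecidableEq α] {A B : Finset α} (h : A ⊆ B)
    (hc : A.card < B.card) : A ⊂ B :=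
  h.ssubset_of_ne (by rintro rfl; omega)

lemma erase_ssub_erase {α : Type*} [DecidableEq α] {A B : Finset α} {y : α}
    (h : A ⊂ B) (hy : y ∈ A ∨ y ∉ B) : A.erase y ⊂ B.erase y := by
  rcases hy with hyA | hyB
  · have hyB : y ∈ B := h.subset hyA
    apply ssub_of_card (Finset.erase_subset_erase _ h.subset)
    have hcc := Finset.card_lt_card h
    have hpos : 1 ≤ A.card := Finset.card_pos.mpr ⟨y, hyA⟩
    rw [Finset.card_erase_of_mem hyA, Finset.card_erase_of_mem hyB]
    omega
  · rw [Finset.erase_eq_of_notMem (fun hh => hyB (h.subset hh)),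
      Finset.erase_eq_of_notMem hyB]
    exact h

lemma build_contr {n k : ℕ} (F : Finset (Finset (Fin n)))
    (hF : ∀ y : Fin n, IsKSperner k (F.image (fun A => A.erase y)))
    (y : Fin n) (P : Fin (k+1) → Finset (Fin n)) (hP : ∀ i, P i ∈ F)
    (hmono : ∀ i : Fin k, (P i.castSucc).erase y ⊂ (P i.succ).erase y) : False := by
  apply hF y
  refine ⟨fun i => (P i).erase y, ?_, fun i => Finset.mem_image_of_mem _ (hP i)⟩
  have hsm : StrictMono (fun i : Fin (k+1) => (P i).erase y) :=
    Fin.strictMono_iff_lt_succ.mpr hmono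
  exact fun i j hij => Finset.lt_iff_ssubset.mp (hsm hij)

set_option maxHeartbeats 1000000 in
theorem stmt9 (n k m : ℕ) (hk : 2 ≤ k) (hnk : k < n) (hm : 2 ≤ m)
    (F : Finset (Finset (Fin n)))
    (hF : ∀ y : Fin n, IsKSperner k (F.image (fun A => A.erase y)))
    (c : Fin k → Finset (Fin n)) (hmem : ∀ i, c i ∈ F)
    (hchain : ∀ i j : Fin k, i < j → c i ⊂ c j)
    (hgap : m = ((c ⟨1, by omega⟩) \ (c ⟨0, by omega⟩)).card)
    (x z : Fin n) (hx : x ∈ c ⟨0, by omega⟩) (hz : z ∉ c ⟨k - 1, by omega⟩)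
    (σ : Fin m → Fin n) (hσinj : Function.Injective σ)
    (hσmem : ∀ j : Fin m, σ j ∈ (c ⟨1, by omega⟩) \ (c ⟨0, by omega⟩))
    (C : Finset (Finset (Fin n))) (hC : C ∈ maxChains n)
    (h1 : insert (σ ⟨0, by omega⟩) ((c ⟨0, by omega⟩).erase x) ∈ C)
    (h2 : ∀ j : Fin m, (j : ℕ) < m - 1 →
      (c ⟨0, by omega⟩) ∪ (Finset.univ.filter (fun t : Fin m => t ≤ j)).image σ ∈ C)
    (h3 : insert z ((c ⟨1, by omega⟩).erase (σ ⟨m - 1, by omega⟩)) ∈ C)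
    (h4 : ∀ j : Fin k, 0 < (j : ℕ) → insert z (c j) ∈ C) :
    (F ∩ C).card ≤ k - 2 := by
  have hk0 : 0 < k := by omega
  have hk1p : 1 < k := by omega
  have hm0 : 0 < m := by omega
  have hmm : m - 1 < m := by omega
  set F1 : Finset (Fin n) := c ⟨0, hk0⟩ with hF1
  set F2 : Finset (Fin n) := c ⟨1, hk1p⟩ with hF2
  set σ0 : Fin n := σ ⟨0, hm0⟩ with hσ0
  set σm : Fin n := σ ⟨m - 1, hmm⟩ with hσm
  -- basic facts
  have hcomp : ∀ A ∈ C, ∀ B ∈ C, A ⊆ B ∨ B ⊆ A := by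
    simp only [maxChains, Finset.mem_filter] at hC
    exact hC.2.2
  have hF12 : F1 ⊂ F2 := hchain _ _ (by simp [Fin.lt_def])
  have hsubk : ∀ i : Fin k, c i ⊆ c ⟨k - 1, by omega⟩ := by
    intro i
    rcases Nat.lt_or_ge (i : ℕ) (k-1) with h | h
    · exact (hchain i ⟨k-1, by omega⟩ (by simpa [Fin.lt_def] using h)).subset
    · have : i = ⟨k-1, by omega⟩ := by
        apply Fin.ext; have := i.isLt; simp; omega
      rw [this]
  have hzc : ∀ i : Fin k, z ∉ c i := fun i h => hz (hsubk i h)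
  have hz1 : z ∉ F1 := hzc _
  have hz2 : z ∉ F2 := hzc _
  have hσF2 : ∀ j : Fin m, σ j ∈ F2 := fun j => (Finset.mem_sdiff.mp (hσmem j)).1
  have hσF1 : ∀ j : Fin m, σ j ∉ F1 := fun j => (Finset.mem_sdiff.mp (hσmem j)).2
  have hzσ : ∀ j : Fin m, z ≠ σ j := fun j h => hz2 (h ▸ hσF2 j)
  have hσ0m : σ0 ≠ σm := by
    intro h
    have := hσinj h
    simp [Fin.ext_iff] at this
    omega
  have hcard12 : F2.card = F1.card + m := by
    have h1 : (F2 \ F1).card = F2.card - F1.card := Finset.card_sdiff_of_subset hF12.subset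
    have h2 : F1.card ≤ F2.card := Finset.card_le_card hF12.subset
    omega
  have himg : ∀ a ∈ F2, a ∉ F1 → ∃ j : Fin m, σ j = a := by
    have hsub : Finset.univ.image σ ⊆ F2 \ F1 := by
      intro a ha
      obtain ⟨j, _, rfl⟩ := Finset.mem_image.mp ha
      exact hσmem j
    have hcards : (F2 \ F1).card ≤ (Finset.univ.image σ).card := by
      rw [Finset.card_image_of_injective _ hσinj, Finset.card_univ, Fintype.card_fin]
      omega
    have := Finset.eq_of_subset_of_card_le hsub hcards
    intro a ha hna
    have : a ∈ Finset.univ.image σ := this ▸ Finset.mem_sdiff.mpr ⟨ha, hna⟩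
    obtain ⟨j, _, hj⟩ := Finset.mem_image.mp this
    exact ⟨j, hj⟩
  -- pinned sets in C
  have hG0 : insert σ0 (F1.erase x) ∈ C := h1
  have hP1 : insert σ0 F1 ∈ C := by
    have key := h2 ⟨0, hm0⟩ (by simp; omega)
    have heq : (Finset.univ.filter (fun t : Fin m => t ≤ ⟨0, hm0⟩)).image σ = {σ0} := by
      ext a
      simp only [Finset.mem_image, Finset.mem_filter, Finset.mem_univ, true_and,
        Finset.mem_singleton]
      constructor
      · rintro ⟨t, ht, rfl⟩
        have ht0 : t = ⟨0, hm0⟩ := by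
          apply Fin.ext; simpa [Fin.le_def] using ht
        rw [ht0, hσ0]
      · rintro rfl
        exact ⟨⟨0, hm0⟩, by simp [Fin.le_def], rfl⟩
    rw [heq] at key
    rw [hσ0]
    rw [Finset.union_comm, ← Finset.insert_eq] at key; exact key
  have hmm2 : m - 2 < m := by omega
  have hPm : F2.erase σm ∈ C := by
    have key := h2 ⟨m-2, hmm2⟩ (by simp; omega)
    have heq : F1 ∪ (Finset.univ.filter (fun t : Fin m => t ≤ ⟨m-2, hmm2⟩)).image σ
        = F2.erase σm := by
      ext a
      simp only [Finset.mem_union, Finset.mem_image, Finset.mem_filter, Finset.mem_univ,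
        true_and, Finset.mem_erase]
      constructor
      · rintro (ha | ⟨t, ht, rfl⟩)
        · exact ⟨fun h => hσF1 _ (h ▸ ha), hF12.subset ha⟩
        · refine ⟨fun h => ?_, hσF2 t⟩
          have htm : t = ⟨m-1, hmm⟩ := hσinj h
          rw [Fin.le_def] at ht
          rw [htm] at ht
          simp at ht
          omega
      · rintro ⟨hne, ha2⟩
        by_cases hf : a ∈ F1
        · exact Or.inl hf
        · obtain ⟨t, rfl⟩ := himg a ha2 hf
          refine Or.inr ⟨t, ?_, rfl⟩
          have htne : (t : ℕ) ≠ m - 1 := by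
            intro h
            exact hne (by rw [hσm]; congr 1; exact Fin.ext h)
          rw [Fin.le_def]
          have := t.isLt
          simp
          omega
    rwa [heq] at key
  have hH : insert z (F2.erase σm) ∈ C := h3
  have hQ : insert z F2 ∈ C := h4 ⟨1, by omega⟩ (by simp)
  -- cardinalities of pinned sets
  have hx1 : 1 ≤ F1.card := Finset.card_pos.mpr ⟨x, hx⟩
  have hcG0 : (insert σ0 (F1.erase x)).card = F1.card := by
    rw [Finset.card_insert_of_notMem (fun h => hσF1 _ (Finset.mem_of_mem_erase h)),
      Finset.card_erase_of_mem hx]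
    omega
  have hcP1 : (insert σ0 F1).card = F1.card + 1 := Finset.card_insert_of_notMem (hσF1 _)
  have hcPm : (F2.erase σm).card = F2.card - 1 := Finset.card_erase_of_mem (hσF2 _)
  have hcH : (insert z (F2.erase σm)).card = F2.card := by
    rw [Finset.card_insert_of_notMem (fun h => hz2 (Finset.mem_of_mem_erase h)), hcPm]
    omega
  have hcQ : (insert z F2).card = F2.card + 1 := Finset.card_insert_of_notMem hz2
  have hσ0F1 : σ0 ∉ F1 := hσF1 _
  have hσ0F2 : σ0 ∈ F2 := hσF2 _
  have hσmF1 : σm ∉ F1 := hσF1 _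
  have hσmF2 : σm ∈ F2 := hσF2 _
  have hsub2 : ∀ j : Fin k, 1 ≤ (j : ℕ) → F2 ⊆ c j := by
    intro j hj
    rcases Nat.lt_or_ge 1 (j : ℕ) with h | h
    · exact (hchain ⟨1, hk1p⟩ j (by simpa [Fin.lt_def] using h)).subset
    · have : j = ⟨1, hk1p⟩ := by apply Fin.ext; simp; omega
      rw [this]
  -- Step 1: every member of F ∩ C is big
  have hbig : ∀ A ∈ F, A ∈ C → F2.card < A.card := by
    intro A hAF hAC
    by_contra hle
    push_neg at hle
    by_cases hA1 : A.card ≤ F1.card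
    · -- low case: A ⊆ G0, trace at σ0
      have hAG0 : A ⊆ insert σ0 (F1.erase x) := by
        rcases hcomp A hAC _ hG0 with h | h
        · exact h
        · exact le_of_eq (Finset.eq_of_subset_of_card_le h (by omega)).symm
      refine build_contr F hF σ0
        (fun i => if (i : ℕ) = 0 then A else if (i : ℕ) = 1 then F1
          else c ⟨(i : ℕ) - 1, by have := i.isLt; omega⟩) ?_ ?_
      · intro i; split_ifs <;> first | exact hAF | exact hmem _
      · intro i
        obtain ⟨iv, hiv⟩ := i
        rcases iv with _ | _ | v
        · show A.erase σ0 ⊂ F1.erase σ0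
          have hsub : A.erase σ0 ⊆ F1.erase x := by
            intro a ha
            have hmem' := hAG0 (Finset.mem_of_mem_erase ha)
            rcases Finset.mem_insert.mp hmem' with h | h
            · exact absurd h (Finset.ne_of_mem_erase ha)
            · exact h
          rw [Finset.erase_eq_of_notMem hσ0F1]
          exact hsub.trans_ssubset (Finset.erase_ssubset hx)
        · show F1.erase σ0 ⊂ F2.erase σ0
          rw [Finset.erase_eq_of_notMem hσ0F1]
          apply ssub_of_card (Finset.subset_erase.mpr ⟨hF12.subset, hσ0F1⟩)
          rw [Finset.card_erase_of_mem hσ0F2]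
          omega
        · show (c ⟨v + 1, by omega⟩).erase σ0 ⊂ (c ⟨v + 2, by omega⟩).erase σ0
          exact erase_ssub_erase (hchain _ _ (by simp [Fin.lt_def]))
            (Or.inl (hsub2 ⟨v + 1, by omega⟩ (by simp) hσ0F2))
    · push_neg at hA1
      by_cases hA2 : A.card < F2.card
      · -- middle case: trace at z
        have hP1A : insert σ0 F1 ⊆ A := by
          rcases hcomp A hAC _ hP1 with h | h
          · exact le_of_eq (Finset.eq_of_subset_of_card_le h (by omega)).symm
          · exact h
        have hPmA : A ⊆ F2.erase σm := by
          rcases hcomp A hAC _ hPm with h | h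
          · exact h
          · exact le_of_eq (Finset.eq_of_subset_of_card_le h (by omega)).symm
        have hzA : z ∉ A := fun h => hz2 (Finset.mem_of_mem_erase (hPmA h))
        refine build_contr F hF z
          (fun i => if (i : ℕ) = 0 then F1 else if (i : ℕ) = 1 then A
            else c ⟨(i : ℕ) - 1, by have := i.isLt; omega⟩) ?_ ?_
        · intro i; split_ifs <;> first | exact hAF | exact hmem _
        · intro i
          obtain ⟨iv, hiv⟩ := i
          rcases iv with _ | _ | v
          · show F1.erase z ⊂ A.erase z
            rw [Finset.erase_eq_of_notMem hz1, Finset.erase_eq_of_notMem hzA]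
            exact ssub_of_card ((Finset.subset_insert _ _).trans hP1A) hA1
          · show A.erase z ⊂ F2.erase z
            rw [Finset.erase_eq_of_notMem hzA, Finset.erase_eq_of_notMem hz2]
            exact ssub_of_card (hPmA.trans (Finset.erase_subset _ _)) hA2
          · show (c ⟨v + 1, by omega⟩).erase z ⊂ (c ⟨v + 2, by omega⟩).erase z
            exact erase_ssub_erase (hchain _ _ (by simp [Fin.lt_def])) (Or.inr (hzc _))
      · -- A = H case: trace at z
        push_neg at hA2
        have hAH : A = insert z (F2.erase σm) := by
          rcases hcomp A hAC _ hH with h | h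
          · exact Finset.eq_of_subset_of_card_le h (by omega)
          · exact (Finset.eq_of_subset_of_card_le h (by omega)).symm
        refine build_contr F hF z
          (fun i => if (i : ℕ) = 0 then F1 else if (i : ℕ) = 1 then A
            else c ⟨(i : ℕ) - 1, by have := i.isLt; omega⟩) ?_ ?_
        · intro i; split_ifs <;> first | exact hAF | exact hmem _
        · intro i
          obtain ⟨iv, hiv⟩ := i
          rcases iv with _ | _ | v
          · show F1.erase z ⊂ A.erase z
            rw [Finset.erase_eq_of_notMem hz1, hAH,
              Finset.erase_insert (fun h => hz2 (Finset.mem_of_mem_erase h))]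
            apply ssub_of_card (Finset.subset_erase.mpr ⟨hF12.subset, hσmF1⟩)
            rw [Finset.card_erase_of_mem hσmF2]
            omega
          · show A.erase z ⊂ F2.erase z
            rw [Finset.erase_eq_of_notMem hz2, hAH,
              Finset.erase_insert (fun h => hz2 (Finset.mem_of_mem_erase h))]
            exact Finset.erase_ssubset hσmF2
          · show (c ⟨v + 1, by omega⟩).erase z ⊂ (c ⟨v + 2, by omega⟩).erase z
            exact erase_ssub_erase (hchain _ _ (by simp [Fin.lt_def])) (Or.inr (hzc _))
  -- Step 2
  by_contra hcon
  push_neg at hcon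
  have hge : k - 1 ≤ (F ∩ C).card := by omega
  obtain ⟨S, hSsub, hScard⟩ := Finset.exists_subset_card_eq hge
  have hSC : ∀ B ∈ S, B ∈ C := fun B hB => (Finset.mem_inter.mp (hSsub hB)).2
  have hSF : ∀ B ∈ S, B ∈ F := fun B hB => (Finset.mem_inter.mp (hSsub hB)).1
  have hinj : Set.InjOn Finset.card (S : Set (Finset (Fin n))) := by
    intro a ha b hb hab
    rcases hcomp a (hSC a ha) b (hSC b hb) with h | h
    · exact Finset.eq_of_subset_of_card_le h (le_of_eq hab.symm)
    · exact (Finset.eq_of_subset_of_card_le h (le_of_eq hab)).symm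
  have hTcard : (S.image Finset.card).card = k - 1 := by
    rw [Finset.card_image_of_injOn hinj, hScard]
  let e := (S.image Finset.card).orderIsoOfFin hTcard
  have hex : ∀ i : Fin (k-1), ∃ B, B ∈ S ∧ B.card = ((e i : ℕ)) := by
    intro i
    have h2' := (e i).2
    simp only [Finset.mem_image] at h2'
    obtain ⟨B, hB, hBc⟩ := h2'
    exact ⟨B, hB, hBc⟩
  choose A hAS hAc using hex
  have hAF : ∀ i, A i ∈ F := fun i => hSF _ (hAS i)
  have hAC : ∀ i, A i ∈ C := fun i => hSC _ (hAS i)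
  have hAcard : ∀ i j : Fin (k-1), i < j → (A i).card < (A j).card := by
    intro i j hij
    rw [hAc i, hAc j]
    exact_mod_cast e.strictMono hij
  have hAmono : ∀ i j : Fin (k-1), i < j → A i ⊂ A j := by
    intro i j hij
    have hc' := hAcard i j hij
    rcases hcomp _ (hAC i) _ (hAC j) with h | h
    · exact ssub_of_card h hc'
    · have := Finset.card_le_card h
      omega
  have hk1 : 0 < k - 1 := by omega
  have hbig0 : F2.card < (A ⟨0, hk1⟩).card := hbig _ (hAF _) (hAC _)
  have hQA0 : insert z F2 ⊆ A ⟨0, hk1⟩ := by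
    rcases hcomp _ (hAC ⟨0, hk1⟩) _ hQ with h | h
    · exact le_of_eq (Finset.eq_of_subset_of_card_le h (by omega)).symm
    · exact h
  have hA0sub : ∀ i : Fin (k-1), A ⟨0, hk1⟩ ⊆ A i := by
    intro i
    rcases Nat.eq_zero_or_pos (i : ℕ) with h | h
    · have : i = ⟨0, hk1⟩ := by apply Fin.ext; simp [h]
      rw [this]
    · exact (hAmono _ _ (by simpa [Fin.lt_def] using h)).subset
  have hzAi : ∀ i, z ∈ A i := fun i => hA0sub i (hQA0 (Finset.mem_insert_self _ _))
  have hσmAi : ∀ i, σm ∈ A i := fun i => hA0sub i (hQA0 (Finset.mem_insert_of_mem hσmF2))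
  by_cases hc1 : (A ⟨0, hk1⟩).card = F2.card + 1
  · -- A0 = insert z F2 : trace at σm
    have hA0Q : A ⟨0, hk1⟩ = insert z F2 :=
      (Finset.eq_of_subset_of_card_le hQA0 (by omega)).symm
    refine build_contr F hF σm
      (fun i => if (i : ℕ) = 0 then F1 else if (i : ℕ) = 1 then F2
        else A ⟨(i : ℕ) - 2, by have := i.isLt; omega⟩) ?_ ?_
    · intro i; split_ifs <;> first | exact hmem _ | exact hAF _
    · intro i
      obtain ⟨iv, hiv⟩ := i
      rcases iv with _ | _ | v
      · show F1.erase σm ⊂ F2.erase σm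
        rw [Finset.erase_eq_of_notMem hσmF1]
        apply ssub_of_card (Finset.subset_erase.mpr ⟨hF12.subset, hσmF1⟩)
        rw [Finset.card_erase_of_mem hσmF2]
        omega
      · show F2.erase σm ⊂ (A ⟨0, hk1⟩).erase σm
        rw [hA0Q, Finset.erase_insert_of_ne (hzσ _)]
        exact Finset.ssubset_insert (fun h => hz2 (Finset.mem_of_mem_erase h))
      · show (A ⟨v, by omega⟩).erase σm ⊂ (A ⟨v + 1, by omega⟩).erase σm
        exact erase_ssub_erase (hAmono _ _ (by simp [Fin.lt_def])) (Or.inl (hσmAi _))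
  · -- trace at z
    have hc2 : F2.card + 1 < (A ⟨0, hk1⟩).card := by
      have := Finset.card_le_card hQA0
      rw [hcQ] at this
      omega
    refine build_contr F hF z
      (fun i => if (i : ℕ) = 0 then F1 else if (i : ℕ) = 1 then F2
        else A ⟨(i : ℕ) - 2, by have := i.isLt; omega⟩) ?_ ?_
    · intro i; split_ifs <;> first | exact hmem _ | exact hAF _
    · intro i
      obtain ⟨iv, hiv⟩ := i
      rcases iv with _ | _ | v
      · show F1.erase z ⊂ F2.erase z
        rw [Finset.erase_eq_of_notMem hz1, Finset.erase_eq_of_notMem hz2]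
        exact hF12
      · show F2.erase z ⊂ (A ⟨0, hk1⟩).erase z
        rw [Finset.erase_eq_of_notMem hz2]
        apply ssub_of_card (Finset.subset_erase.mpr
          ⟨(Finset.subset_insert _ _).trans hQA0, hz2⟩)
        rw [Finset.card_erase_of_mem (hzAi _)]
        omega
      · show (A ⟨v, by omega⟩).erase z ⊂ (A ⟨v + 1, by omega⟩).erase z
        exact erase_ssub_erase (hAmono _ _ (by simp [Fin.lt_def])) (Or.inl (hzAi _))
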